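/- Let A and B be contractions on H such that A and B* are essentially isometric, and assume that ‖Aⁿx‖ → 0 and ‖B*ⁿx‖ → 0 as n → ∞ for every x ∈ H. Let I_{A,B} = {T ∈ B(H) : ATB = T}. Then for every compact operator K on H one has dist(K, I_{A,B}) ≥ (1/2)‖K‖. Moreover, if AB = I this estimate is best possible: for a rank-one projection K = x⊗x with ‖x‖ = 1, taking T = −(1/2)I ∈ I_{A,B} gives ‖K + T‖ = 1/2. -/

import Mathlib

open ContinuousLinearMap Filter Topology

lemma aux_norm_comp_stmt8 {H : Type*} [NormedAddCommGroup H] [InnerProductSpace ℂ H]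
    [CompleteSpace H]
    (A : ℕ → H →L[ℂ] H) (hA1 : ∀ n, ‖A n‖ ≤ 1)
    (hA0 : ∀ y : H, Tendsto (fun n => ‖A n y‖) atTop (𝓝 0))
    (K : H →L[ℂ] H) (hK : IsCompactOperator ⇑K) :
    Tendsto (fun n => ‖(A n) * K‖) atTop (𝓝 0) := by
  rw [Metric.tendsto_atTop]
  intro ε hε
  have hM : IsCompact (closure (⇑K '' Metric.closedBall 0 1)) :=
    hK.isCompact_closure_image_closedBall 1
  obtain ⟨t, htfin, hcov⟩ := (Metric.totallyBounded_iff.mp hM.totallyBounded) (ε/4) (by linarith)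
  have hev : ∀ᶠ n in atTop, ∀ y ∈ t, ‖A n y‖ < ε/4 := by
    rw [eventually_all_finite htfin]
    intro y _
    have := (hA0 y).eventually (eventually_lt_nhds (show (0:ℝ) < ε/4 by linarith))
    simpa using this
  obtain ⟨N, hN⟩ := eventually_atTop.mp hev
  refine ⟨N, fun n hn => ?_⟩
  have hball : ∀ w : H, ‖w‖ ≤ 1 → ‖(A n) (K w)‖ ≤ ε/2 := by
    intro w hw
    have hmem : K w ∈ closure (⇑K '' Metric.closedBall 0 1) :=
      subset_closure ⟨w, by simpa using hw, rfl⟩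
    obtain ⟨y, hyt, hy⟩ := Set.mem_iUnion₂.mp (hcov hmem)
    have h1 : ‖(A n) (K w - y)‖ ≤ ‖K w - y‖ := by
      calc ‖(A n) (K w - y)‖ ≤ ‖A n‖ * ‖K w - y‖ := le_opNorm _ _
        _ ≤ 1 * ‖K w - y‖ := by
            exact mul_le_mul_of_nonneg_right (hA1 n) (norm_nonneg _)
        _ = ‖K w - y‖ := one_mul _
    have h2 : ‖K w - y‖ < ε/4 := by
      simpa [dist_eq_norm] using hy
    have h3 : ‖(A n) y‖ < ε/4 := hN n hn y hyt
    calc ‖(A n) (K w)‖ = ‖(A n) (K w - y) + (A n) y‖ := by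
          rw [← map_add, sub_add_cancel]
      _ ≤ ‖(A n) (K w - y)‖ + ‖(A n) y‖ := norm_add_le _ _
      _ ≤ ε/4 + ε/4 := by linarith
      _ = ε/2 := by ring
  have hop : ‖(A n) * K‖ ≤ ε/2 := by
    refine opNorm_le_bound _ (by linarith) (fun z => ?_)
    rcases eq_or_ne z 0 with rfl | hz
    · simp
    · have hz' : (0:ℝ) < ‖z‖ := norm_pos_iff.mpr hz
      have hw : ‖(‖z‖⁻¹ : ℂ) • z‖ ≤ 1 := by
        rw [norm_smul]
        simp [abs_of_nonneg (le_of_lt hz'), inv_mul_cancel₀ (ne_of_gt hz')]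
      have := hball _ hw
      have heq : (A n) (K ((‖z‖⁻¹ : ℂ) • z)) = (‖z‖⁻¹ : ℂ) • (A n) (K z) := by
        simp [map_smul]
      rw [heq, norm_smul] at this
      have : (‖z‖)⁻¹ * ‖(A n) (K z)‖ ≤ ε/2 := by
        simpa [abs_of_nonneg (le_of_lt hz')] using this
      calc ‖((A n) * K) z‖ = ‖(A n) (K z)‖ := rfl
        _ = ‖z‖ * ((‖z‖)⁻¹ * ‖(A n) (K z)‖) := by
            field_simp
        _ ≤ ‖z‖ * (ε/2) := by
            exact mul_le_mul_of_nonneg_left this (le_of_lt hz')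
        _ = ε/2 * ‖z‖ := by ring
  have : dist ‖(A n) * K‖ 0 = ‖(A n) * K‖ := by
    simp [dist_eq_norm, abs_of_nonneg (norm_nonneg _)]
  rw [this]
  linarith

/-- **Proposition 2.9.** Let `A` and `B*` be essentially isometric contractions on `H`
with `‖Aⁿx‖ → 0` and `‖B*ⁿx‖ → 0` for all `x ∈ H`, and let
`I_{A,B} = {T : ATB = T}`. Then `dist(K, I_{A,B}) ≥ ‖K‖/2` for every compact `K`.
If moreover `AB = I`, the estimate is best possible: for `K = x ⊗ x` with `‖x‖ = 1`
and `T = -(1/2)I ∈ I_{A,B}` one has `‖K + T‖ = 1/2`. -/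
theorem stmt_8 {H : Type*} [NormedAddCommGroup H] [InnerProductSpace ℂ H]
    [CompleteSpace H] [TopologicalSpace.SeparableSpace H]
    (hinf : ¬ FiniteDimensional ℂ H)
    (A B : H →L[ℂ] H)
    (hAc : ‖A‖ ≤ 1) (hBc : ‖B‖ ≤ 1)
    (hA : IsCompactOperator (⇑((1 : H →L[ℂ] H) - adjoint A * A)))
    (hB : IsCompactOperator (⇑((1 : H →L[ℂ] H) - B * adjoint B)))
    (hAn : ∀ x : H, Tendsto (fun n : ℕ => ‖(A ^ n) x‖) atTop (𝓝 0))
    (hBn : ∀ x : H, Tendsto (fun n : ℕ => ‖((adjoint B) ^ n) x‖) atTop (𝓝 0)) :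
    (∀ K : H →L[ℂ] H, IsCompactOperator ⇑K →
      (1 / 2) * ‖K‖ ≤ Metric.infDist K {T : H →L[ℂ] H | A * T * B = T}) ∧
    (A * B = 1 → ∀ x : H, ‖x‖ = 1 →
      A * (-(1 / 2 : ℂ) • (1 : H →L[ℂ] H)) * B = -(1 / 2 : ℂ) • (1 : H →L[ℂ] H) ∧
      ‖(innerSL ℂ x).smulRight x + -(1 / 2 : ℂ) • (1 : H →L[ℂ] H)‖ = 1 / 2) := by
  have hpow : ∀ (C : H →L[ℂ] H), ‖C‖ ≤ 1 → ∀ n : ℕ, ‖C ^ n‖ ≤ 1 := by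
    intro C hC n
    induction n with
    | zero => rw [pow_zero]; exact norm_id_le
    | succ n ih =>
      rw [pow_succ]
      calc ‖C ^ n * C‖ ≤ ‖C ^ n‖ * ‖C‖ := norm_mul_le _ _
        _ ≤ 1 * 1 := mul_le_mul ih hC (norm_nonneg _) zero_le_one
        _ = 1 := one_mul 1
  constructor
  · -- Part 1
    intro K hK
    have hcomp : Tendsto (fun n => ‖(A ^ n) * K‖) atTop (𝓝 0) :=
      aux_norm_comp_stmt8 (fun n => A ^ n) (hpow A hAc) hAn K hK
    set S := {T : H →L[ℂ] H | A * T * B = T} with hSdef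
    have h0 : (0 : H →L[ℂ] H) ∈ S := by simp [hSdef]
    have hkey : ∀ T ∈ S, (1/2) * ‖K‖ ≤ dist K T := by
      intro T hT
      have hApow := hpow A hAc
      have hBpow := hpow B hBc
      have hiter : ∀ n : ℕ, A ^ n * T * B ^ n = T := by
        intro n
        induction n with
        | zero => simp
        | succ n ih =>
          rw [pow_succ', pow_succ]
          calc A * A ^ n * T * (B ^ n * B) = A * (A ^ n * T * B ^ n) * B := by
                simp only [mul_assoc]
            _ = A * T * B := by rw [ih]
            _ = T := hT
      have hTle : ∀ n : ℕ, ‖T‖ ≤ dist K T + ‖A ^ n * K‖ := by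
        intro n
        have : T = A ^ n * (T - K) * B ^ n + A ^ n * K * B ^ n := by
          rw [mul_sub, sub_mul, sub_add_cancel, hiter n]
        calc ‖T‖ = ‖A ^ n * (T - K) * B ^ n + A ^ n * K * B ^ n‖ := by rw [← this]
          _ ≤ ‖A ^ n * (T - K) * B ^ n‖ + ‖A ^ n * K * B ^ n‖ := norm_add_le _ _
          _ ≤ ‖T - K‖ + ‖A ^ n * K‖ := by
              gcongr
              · calc ‖A ^ n * (T - K) * B ^ n‖ ≤ ‖A ^ n * (T - K)‖ * ‖B ^ n‖ :=
                      norm_mul_le _ _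
                  _ ≤ ‖A ^ n * (T - K)‖ * 1 := by
                      exact mul_le_mul_of_nonneg_left (hBpow n) (norm_nonneg _)
                  _ = ‖A ^ n * (T - K)‖ := mul_one _
                  _ ≤ ‖A ^ n‖ * ‖T - K‖ := norm_mul_le _ _
                  _ ≤ 1 * ‖T - K‖ := by
                      exact mul_le_mul_of_nonneg_right (hApow n) (norm_nonneg _)
                  _ = ‖T - K‖ := one_mul _
              · calc ‖A ^ n * K * B ^ n‖ ≤ ‖A ^ n * K‖ * ‖B ^ n‖ := norm_mul_le _ _
                  _ ≤ ‖A ^ n * K‖ * 1 := by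
                      exact mul_le_mul_of_nonneg_left (hBpow n) (norm_nonneg _)
                  _ = ‖A ^ n * K‖ := mul_one _
          _ = dist K T + ‖A ^ n * K‖ := by rw [dist_eq_norm, norm_sub_rev]
      have hTle' : ‖T‖ ≤ dist K T := by
        have hlim : Tendsto (fun n => dist K T + ‖A ^ n * K‖) atTop (𝓝 (dist K T)) := by
          simpa using (tendsto_const_nhds.add hcomp)
        exact ge_of_tendsto hlim (Eventually.of_forall hTle)
      have hKd : ‖K‖ ≤ ‖K - T‖ + ‖T‖ := by simpa using norm_add_le (K - T) T
      have hd : dist K T = ‖K - T‖ := dist_eq_norm _ _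
      linarith
    by_contra hcon
    push_neg at hcon
    obtain ⟨T, hT, hd⟩ := (Metric.infDist_lt_iff ⟨0, h0⟩).mp hcon
    exact absurd hd (not_lt.mpr (hkey T hT))
  · -- Part 2
    intro hAB x hx
    constructor
    · rw [mul_smul_comm, mul_one, smul_mul_assoc, hAB]
    · set S : H →L[ℂ] H := (innerSL ℂ x).smulRight x + -(1 / 2 : ℂ) • (1 : H →L[ℂ] H)
        with hS
      have key : ∀ y : H, ‖S y‖ = (1/2) * ‖y‖ := by
        intro y
        have happ : S y = (inner ℂ x y : ℂ) • x + (-(1/2 : ℂ)) • y := by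
          simp [hS]
        have hsq : ‖S y‖ ^ 2 = ((1/2) * ‖y‖) ^ 2 := by
          rw [happ, @norm_add_sq ℂ]
          simp [inner_smul_left, inner_smul_right, inner_self_eq_norm_sq, norm_smul, hx,
            Complex.mul_conj]
          rw [mul_comm]
          ring_nf
          have hc : (inner ℂ y x : ℂ) = (starRingEnd ℂ) (inner ℂ x y) := (inner_conj_symm y x).symm
          have hre : (inner ℂ y x : ℂ).re = (inner ℂ x y : ℂ).re := by rw [hc, Complex.conj_re]
          have him : (inner ℂ y x : ℂ).im = -(inner ℂ x y : ℂ).im := by rw [hc, Complex.conj_im]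
          rw [hre, him, Complex.sq_norm, Complex.normSq_apply]
          ring
        have h1 : (0:ℝ) ≤ ‖S y‖ := norm_nonneg _
        have h2 : (0:ℝ) ≤ (1/2) * ‖y‖ := by positivity
        nlinarith [sq_nonneg (‖S y‖ - (1/2)*‖y‖), sq_nonneg (‖S y‖ + (1/2)*‖y‖)]
      refine le_antisymm ?_ ?_
      · exact opNorm_le_bound _ (by norm_num) (fun y => le_of_eq (key y))
      · have := key x
        rw [hx, mul_one] at this
        calc (1/2 : ℝ) = ‖S x‖ := this.symm
          _ ≤ ‖S‖ * ‖x‖ := le_opNorm _ _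
          _ = ‖S‖ := by rw [hx, mul_one]
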